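/- Let A be a commutative ring, B a finite A-algebra equipped with an action of a finite group G by A-algebra automorphisms such that A ⊆ B^G. Let I be an ideal of A and J = IB. Then G acts continuously for the J-adic topology, inducing an action on the J-adic completion of B, and under the canonical identification of the completion of B with B ⊗_A Â (where Â is the I-adic completion of A), the ring of G-invariants of the completion equals B^G ⊗_A Â. -/

import Mathlib

open scoped TensorProduct

lemma piRightHom_proj {A : Type*} [CommRing A] {G : Type*}
    {B M : Type*} [AddCommGroup B] [Module A B] [AddCommGroup M] [Module A M]
    (z : M ⊗[A] (G → B)) (g : G) :
    TensorProduct.piRightHom A A M (fun _ : G => B) z g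
      = (LinearMap.proj (φ := fun _ : G => B) g).lTensor M z := by
  induction z using TensorProduct.induction_on with
  | zero => simp
  | tmul m f => simp
  | add u v hu hv => simp [hu, hv]

lemma pi_rTensor_inj {A : Type*} [CommRing A] {G : Type*} [Fintype G] [DecidableEq G]
    {B M : Type*} [AddCommGroup B] [Module A B] [AddCommGroup M] [Module A M]
    (y : (G → B) ⊗[A] M) (h : ∀ g : G, (LinearMap.proj g).rTensor M y = 0) : y = 0 := by
  set z := (TensorProduct.comm A M (G → B)).symm y with hz
  have hy : (TensorProduct.comm A M (G → B)) z = y := by rw [hz]; simp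
  have key : ∀ g : G, (LinearMap.proj (φ := fun _ : G => B) g).lTensor M z = 0 := by
    intro g
    have h3 := LinearMap.congr_fun
      (LinearMap.comm_comp_rTensor_comp_comm_eq (Q := M)
        (LinearMap.proj (φ := fun _ : G => B) g)) z
    simp only [LinearMap.coe_comp, Function.comp_apply, LinearEquiv.coe_coe, hy] at h3
    rw [← h3, h g, map_zero]
  have hzero : TensorProduct.piRightHom A A M (fun _ : G => B) z = 0 := by
    funext g
    rw [piRightHom_proj, key]
    rfl
  have hz0 : z = 0 := by
    apply (TensorProduct.piRight A A M (fun _ : G => B)).injective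
    rw [TensorProduct.piRight_apply, hzero, map_zero]
  rw [← hy, hz0, map_zero]

lemma map_id_eq_rTensor {A B C M : Type*} [CommRing A] [CommRing B] [CommRing C] [CommRing M]
    [Algebra A B] [Algebra A C] [Algebra A M] (f : B →ₐ[A] C) (w : B ⊗[A] M) :
    Algebra.TensorProduct.map f (AlgHom.id A M) w = f.toLinearMap.rTensor M w := by
  induction w using TensorProduct.induction_on with
  | zero => simp
  | tmul b m => simp
  | add u v hu hv => simp [hu, hv]


/-- The subalgebra of `G`-invariant elements of `B`, for an action of `G` on `B` by
`A`-algebra automorphisms. -/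
def fixedSubalgebra {A B : Type*} [CommRing A] [CommRing B] [Algebra A B]
    (G : Type*) [Group G] (ρ : G →* (B ≃ₐ[A] B)) : Subalgebra A B where
  carrier := {b | ∀ g : G, ρ g b = b}
  mul_mem' hx hy := fun g => by simp [map_mul, hx g, hy g]
  add_mem' hx hy := fun g => by simp [map_add, hx g, hy g]
  algebraMap_mem' a := fun g => (ρ g).commutes a

/-- Let `A` be a noetherian commutative ring, `B` a finite `A`-algebra,
`G` a finite group acting on `B` by `A`-algebra automorphisms (so `A ⊆ B^G`), `I` an
ideal of `A` and `Â` the `I`-adic completion of `A`.  Under the canonical identification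
of the `J`-adic completion of `B` (`J = IB`) with `B ⊗[A] Â` coming from finiteness of
`B` over `A`, the ring of `G`-invariants of the completion — i.e. the invariants of the
action `g ⊗ id` on `B ⊗[A] Â` — equals `B^G ⊗[A] Â`, i.e. the image of the canonical map
`(B^G) ⊗[A] Â → B ⊗[A] Â`. -/
theorem statement1 {A B : Type*} [CommRing A] [IsNoetherianRing A]
    [CommRing B] [Algebra A B] [Module.Finite A B] [IsNoetherianRing B]
    (G : Type*) [Group G] [Finite G] (ρ : G →* (B ≃ₐ[A] B))
    (I : Ideal A) (x : B ⊗[A] AdicCompletion I A) :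
    (∀ g : G, Algebra.TensorProduct.map (ρ g).toAlgHom
        (AlgHom.id A (AdicCompletion I A)) x = x) ↔
      x ∈ (Algebra.TensorProduct.map (fixedSubalgebra G ρ).val
        (AlgHom.id A (AdicCompletion I A))).range := by
  classical
  have : Fintype G := Fintype.ofFinite G
  set Ah := AdicCompletion I A with hAh
  haveI : Module.Flat A Ah := AdicCompletion.flat_of_isNoetherian I
  set S := fixedSubalgebra G ρ with hS
  set ι : S →ₗ[A] B := S.val.toLinearMap with hι
  set F : B →ₗ[A] (G → B) := LinearMap.pi (fun g => (ρ g).toLinearMap - LinearMap.id) with hF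
  have hex : Function.Exact ι F := by
    intro b
    constructor
    · intro hb
      refine ⟨⟨b, fun g => ?_⟩, rfl⟩
      have := congrFun hb g
      simpa [hF, sub_eq_zero] using this
    · rintro ⟨⟨b, hbmem⟩, rfl⟩
      funext g
      have hb : (ι ⟨b, hbmem⟩ : B) = b := rfl
      simp only [hF, LinearMap.pi_apply, LinearMap.sub_apply, LinearMap.id_apply,
        AlgEquiv.toLinearMap_apply, Pi.zero_apply, hb]
      rw [hbmem g, sub_self]
  have hex' := Module.Flat.rTensor_exact Ah hex
  have hproj : ∀ g : G, (LinearMap.proj g).comp F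
      = (ρ g).toLinearMap - LinearMap.id := by
    intro g; ext b; simp [hF]
  have hx' : ∀ w : B ⊗[A] Ah, ∀ g : G,
      (LinearMap.rTensor Ah (ρ g).toLinearMap) w
        = Algebra.TensorProduct.map (ρ g).toAlgHom (AlgHom.id A Ah) w := by
    intro w g
    rw [map_id_eq_rTensor (ρ g).toAlgHom w]
    rfl
  constructor
  · intro hx
    have hker : F.rTensor Ah x = 0 := by
      apply pi_rTensor_inj
      intro g
      rw [← LinearMap.rTensor_comp_apply, hproj g, LinearMap.rTensor_sub,
        LinearMap.sub_apply, LinearMap.rTensor_id, LinearMap.id_apply]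
      rw [hx' x g, hx g, sub_self]
    obtain ⟨y, hy⟩ := (hex' x).mp hker
    refine ⟨y, ?_⟩
    show Algebra.TensorProduct.map S.val (AlgHom.id A Ah) y = x
    rw [map_id_eq_rTensor]
    exact hy
  · rintro ⟨y, hy⟩ g
    have hy' : ι.rTensor Ah y = x := by
      rw [← map_id_eq_rTensor S.val y]; exact hy
    rw [← hy', ← hx' _ g]
    have hker : F.rTensor Ah (ι.rTensor Ah y) = 0 := (hex' _).mpr ⟨y, rfl⟩
    have hg : ((LinearMap.proj g).comp F).rTensor Ah (ι.rTensor Ah y) = 0 := by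
      rw [LinearMap.rTensor_comp_apply, hker, LinearMap.map_zero]
    rw [hproj g, LinearMap.rTensor_sub, LinearMap.sub_apply, LinearMap.rTensor_id,
      LinearMap.id_apply, sub_eq_zero] at hg
    exact hg
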